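/- Let m ≥ 1 be an integer. For every integer k with 1 ≤ k ≤ 2m there exists a constant C > 0, depending only on m and k, such that the k-th derivative of the function r ↦ cos(r)^{2m} satisfies |d^k/dr^k (cos^{2m})(r)| ≤ C * cos(r)^{2m-k} for all r ∈ [-π/2, π/2]. -/

import Mathlib

open Real Finset

private lemma rep_key (c : ℝ) (n b : ℕ) (r : ℝ) :
    HasDerivAt (fun r : ℝ => c * Real.cos r ^ (n - b) * Real.sin r ^ b)
      (-((n - b : ℕ) : ℝ) * c * Real.cos r ^ (n - (b + 1)) * Real.sin r ^ (b + 1)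
        + (b : ℝ) * c * Real.cos r ^ (n - b + 1) * Real.sin r ^ (b - 1)) r := by
  have h := (((Real.hasDerivAt_cos r).pow (n - b)).mul
      ((Real.hasDerivAt_sin r).pow b)).const_mul c
  simp only [Pi.pow_apply, Pi.mul_apply] at h
  have hfun : (fun r : ℝ => c * (Real.cos r ^ (n - b) * Real.sin r ^ b))
      = fun r : ℝ => c * Real.cos r ^ (n - b) * Real.sin r ^ b := by
    funext x; ring
  rw [hfun] at h
  refine h.congr_deriv ?_
  rw [← Nat.sub_sub, pow_succ (Real.sin r) b, pow_succ (Real.cos r) (n - b)]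
  ring

private lemma rep (m : ℕ) : ∀ k, k ≤ 2 * m → ∃ c : ℕ → ℝ, (∀ b, k < b → c b = 0) ∧
    ∀ r : ℝ, iteratedDeriv k (fun s : ℝ => Real.cos s ^ (2 * m)) r
      = ∑ b ∈ Finset.range (2 * m + 1),
          c b * Real.cos r ^ (2 * m - b) * Real.sin r ^ b := by
  intro k
  induction k with
  | zero =>
    intro _
    refine ⟨fun b => if b = 0 then 1 else 0, ?_, ?_⟩
    · intro b hb
      have : b ≠ 0 := by omega
      simp [this]
    · intro r
      rw [iteratedDeriv_zero]
      rw [Finset.sum_eq_single 0]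
      · simp
      · intro b _ hb; simp [hb]
      · intro h; simp at h
  | succ k ih =>
    intro hk
    obtain ⟨c, hc0, hc⟩ := ih (le_trans (Nat.le_succ k) hk)
    set n := 2 * m with hn
    refine ⟨fun j => (if j = 0 then 0 else -((n - (j - 1) : ℕ) : ℝ) * c (j - 1))
        + ((j : ℝ) + 1) * c (j + 1), ?_, ?_⟩
    · intro b hb
      have h1 : c (b + 1) = 0 := hc0 _ (by omega)
      rcases Nat.eq_zero_or_pos b with h | h
      · omega
      · have h2 : c (b - 1) = 0 := hc0 _ (by omega)
        have hbne : b ≠ 0 := by omega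
        simp [h1, h2, hbne]
    · intro r
      rw [iteratedDeriv_succ]
      have heq : iteratedDeriv k (fun s : ℝ => Real.cos s ^ (2 * m))
          = fun r => ∑ b ∈ Finset.range (n + 1),
              c b * Real.cos r ^ (n - b) * Real.sin r ^ b := funext hc
      rw [heq]
      have hder : HasDerivAt (fun r : ℝ => ∑ b ∈ Finset.range (n + 1),
            c b * Real.cos r ^ (n - b) * Real.sin r ^ b)
          (∑ b ∈ Finset.range (n + 1),
            (-((n - b : ℕ) : ℝ) * c b * Real.cos r ^ (n - (b + 1)) * Real.sin r ^ (b + 1)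
              + (b : ℝ) * c b * Real.cos r ^ (n - b + 1) * Real.sin r ^ (b - 1))) r :=
        HasDerivAt.fun_sum fun b _ => rep_key (c b) n b r
      rw [hder.deriv]
      rw [Finset.sum_add_distrib]
      have hrhs : ∀ j, ((if j = 0 then 0 else -((n - (j - 1) : ℕ) : ℝ) * c (j - 1))
            + ((j : ℝ) + 1) * c (j + 1)) * Real.cos r ^ (n - j) * Real.sin r ^ j
          = (if j = 0 then 0 else -((n - (j - 1) : ℕ) : ℝ) * c (j - 1))
              * Real.cos r ^ (n - j) * Real.sin r ^ j
            + ((j : ℝ) + 1) * c (j + 1) * Real.cos r ^ (n - j) * Real.sin r ^ j := by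
        intro j; ring
      rw [Finset.sum_congr rfl fun j _ => hrhs j, Finset.sum_add_distrib]
      congr 1
      · -- first sums equal
        rw [Finset.sum_range_succ' (fun j =>
            (if j = 0 then 0 else -((n - (j - 1) : ℕ) : ℝ) * c (j - 1))
              * Real.cos r ^ (n - j) * Real.sin r ^ j) n]
        rw [Finset.sum_range_succ (fun b =>
            -((n - b : ℕ) : ℝ) * c b * Real.cos r ^ (n - (b + 1)) * Real.sin r ^ (b + 1)) n]
        simp only [Nat.sub_self, Nat.cast_zero, neg_zero, zero_mul, mul_zero, add_zero,
          if_pos rfl, if_neg (Nat.succ_ne_zero _), Nat.succ_sub_one, zero_add]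
        simp
      · -- second sums equal
        rw [Finset.sum_range_succ' (fun b =>
            (b : ℝ) * c b * Real.cos r ^ (n - b + 1) * Real.sin r ^ (b - 1)) n]
        rw [Finset.sum_range_succ (fun j =>
            ((j : ℝ) + 1) * c (j + 1) * Real.cos r ^ (n - j) * Real.sin r ^ j) n]
        have hcn : c (n + 1) = 0 := hc0 _ (by omega)
        simp only [Nat.cast_zero, zero_mul, mul_zero, add_zero, zero_add, hcn,
          Nat.succ_sub_one, Nat.cast_succ]
        apply Finset.sum_congr rfl
        intro b hb
        have hb' : b < n := Finset.mem_range.mp hb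
        have hexp : n - (b + 1) + 1 = n - b := by omega
        rw [hexp]

/-- Let `m ≥ 1` be an integer. For every integer `k` with `1 ≤ k ≤ 2m` there exists a
constant `C > 0`, depending only on `m` and `k`, such that the `k`-th derivative of
`r ↦ cos r ^ (2m)` satisfies `|d^k/dr^k (cos^{2m})(r)| ≤ C * cos r ^ (2m - k)` for all
`r ∈ [-π/2, π/2]`. -/
theorem stmt_5 (m : ℕ) (hm : 1 ≤ m) (k : ℕ) (hk1 : 1 ≤ k) (hk2 : k ≤ 2 * m) :
    ∃ C : ℝ, 0 < C ∧ ∀ r ∈ Set.Icc (-(Real.pi / 2)) (Real.pi / 2),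
      |iteratedDeriv k (fun s : ℝ => Real.cos s ^ (2 * m)) r| ≤
        C * Real.cos r ^ (2 * m - k) := by
  obtain ⟨c, hc0, hc⟩ := rep m k hk2
  refine ⟨(∑ b ∈ Finset.range (2 * m + 1), |c b|) + 1, by positivity, ?_⟩
  intro r hr
  have hcos : 0 ≤ Real.cos r := Real.cos_nonneg_of_mem_Icc hr
  have hcos1 : Real.cos r ≤ 1 := Real.cos_le_one r
  have hpow : 0 ≤ Real.cos r ^ (2 * m - k) := pow_nonneg hcos _
  rw [hc r]
  calc |∑ b ∈ Finset.range (2 * m + 1), c b * Real.cos r ^ (2 * m - b) * Real.sin r ^ b|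
      ≤ ∑ b ∈ Finset.range (2 * m + 1),
          |c b * Real.cos r ^ (2 * m - b) * Real.sin r ^ b| :=
        Finset.abs_sum_le_sum_abs _ _
    _ ≤ ∑ b ∈ Finset.range (2 * m + 1), |c b| * Real.cos r ^ (2 * m - k) := by
        apply Finset.sum_le_sum
        intro b _
        rcases le_or_gt b k with hbk | hbk
        · rw [abs_mul, abs_mul, abs_of_nonneg (pow_nonneg hcos _)]
          have h1 : Real.cos r ^ (2 * m - b) ≤ Real.cos r ^ (2 * m - k) :=
            pow_le_pow_of_le_one hcos hcos1 (by omega)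
          have h2 : |Real.sin r ^ b| ≤ 1 := by
            rw [abs_pow]
            exact pow_le_one₀ (abs_nonneg _) (abs_sin_le_one r)
          calc |c b| * Real.cos r ^ (2 * m - b) * |Real.sin r ^ b|
              ≤ |c b| * Real.cos r ^ (2 * m - k) * 1 := by
                apply mul_le_mul (mul_le_mul_of_nonneg_left h1 (abs_nonneg _)) h2
                  (abs_nonneg _) (by positivity)
            _ = |c b| * Real.cos r ^ (2 * m - k) := mul_one _
        · rw [hc0 b hbk]
          simp
    _ = (∑ b ∈ Finset.range (2 * m + 1), |c b|) * Real.cos r ^ (2 * m - k) :=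
        (Finset.sum_mul _ _ _).symm
    _ ≤ ((∑ b ∈ Finset.range (2 * m + 1), |c b|) + 1) * Real.cos r ^ (2 * m - k) := by
        apply mul_le_mul_of_nonneg_right (by linarith [le_refl (0:ℝ)]) hpow
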